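/- Let A be a nondegenerate finite quadratic form and let n be an integer. Then the set A^{n*} is nonempty and is a coset of nA, i.e. A^{n*} = δ₀ + nA for any δ₀ ∈ A^{n*}. Moreover A^{n*} contains an element δ with 2δ = 0. -/

import Mathlib

open Function

namespace NStarAux

/-- The additive map `ℚ/ℤ → ℝ/ℤ` induced by the inclusion `ℚ → ℝ`. -/
noncomputable def ratToReal : AddCircle (1 : ℚ) →+ AddCircle (1 : ℝ) :=
  QuotientAddGroup.map _ _ (Rat.castHom ℝ).toAddMonoidHom (by
    intro x hx
    obtain ⟨k, hk⟩ := AddSubgroup.mem_zmultiples_iff.mp hx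
    refine AddSubgroup.mem_comap.mpr (AddSubgroup.mem_zmultiples_iff.mpr ⟨k, ?_⟩)
    have : ((k • (1 : ℚ) : ℚ) : ℝ) = k • (1 : ℝ) := by simp
    rw [← this, hk]
    rfl)

lemma ratToReal_injective : Function.Injective ratToReal := by
  intro x y
  refine QuotientAddGroup.induction_on x fun a => QuotientAddGroup.induction_on y fun c h => ?_
  have h' : ((a : ℝ) : AddCircle (1 : ℝ)) = ((c : ℝ) : AddCircle (1 : ℝ)) := h
  obtain ⟨k, hk⟩ := AddSubgroup.mem_zmultiples_iff.mp ((QuotientAddGroup.eq).mp h')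
  refine (QuotientAddGroup.eq).mpr (AddSubgroup.mem_zmultiples_iff.mpr ⟨k, ?_⟩)
  have : ((k • (1 : ℚ) : ℚ) : ℝ) = -(a : ℝ) + (c : ℝ) := by simpa using hk
  have h2 : ((k • (1 : ℚ) : ℚ) : ℝ) = ((-a + c : ℚ) : ℝ) := by rw [this]; push_cast; ring
  exact_mod_cast h2

variable {A : Type*} [AddCommGroup A]

/-- Turn a `ℚ/ℤ`-valued character into a `ℂ`-valued additive character. -/
noncomputable def toComplexChar (c : A →+ AddCircle (1 : ℚ)) : AddChar A ℂ where
  toFun a := (AddCircle.toCircle (ratToReal (c a)) : ℂ)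
  map_zero_eq_one' := by
    simp only [map_zero, AddCircle.toCircle_zero]
    rfl
  map_add_eq_mul' a b := by
    simp only [map_add, AddCircle.toCircle_add, Circle.coe_mul]

lemma toComplexChar_injective :
    Function.Injective (toComplexChar (A := A)) := by
  intro c c' h
  ext a
  have h1 : toComplexChar c a = toComplexChar c' a := by rw [h]
  have h2 : AddCircle.toCircle (ratToReal (c a)) = AddCircle.toCircle (ratToReal (c' a)) :=
    Subtype.coe_injective h1
  exact ratToReal_injective (AddCircle.injective_toCircle one_ne_zero h2)

lemma char_finite [Finite A] : Finite (A →+ AddCircle (1 : ℚ)) :=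
  Finite.of_injective _ toComplexChar_injective

/-- Key surjectivity: an injective map `A → Hom(A, ℚ/ℤ)` is surjective when `A` is finite. -/
lemma surj [Fintype A] (T : A → (A →+ AddCircle (1 : ℚ))) (hT : Injective T) :
    Surjective T := by
  have hfin : Finite (A →+ AddCircle (1 : ℚ)) := char_finite
  have h1 : Nat.card (A →+ AddCircle (1 : ℚ)) ≤ Nat.card (AddChar A ℂ) :=
    Nat.card_le_card_of_injective _ toComplexChar_injective
  have h2 : Nat.card (AddChar A ℂ) = Nat.card A := by
    simp [Nat.card_eq_fintype_card, AddChar.card_eq]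
  have h3 : Nat.card A ≤ Nat.card (A →+ AddCircle (1 : ℚ)) :=
    Nat.card_le_card_of_injective _ hT
  exact ((Nat.bijective_iff_injective_and_card T).mpr ⟨hT, by omega⟩).surjective

/-- Characters extend along injective maps (divisibility of `ℚ/ℤ`). -/
lemma extend {M : Type*} [AddCommGroup M] (g : M →+ A) (hg : Injective g)
    (c : M →+ AddCircle (1 : ℚ)) :
    ∃ ψ : A →+ AddCircle (1 : ℚ), ∀ m, ψ (g m) = c m := by
  obtain ⟨ψ, hψ⟩ := CharacterModule.dual_surjective_of_injective g.toIntLinearMap hg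
    (show CharacterModule M from c)
  exact ⟨ψ, fun m => DFunLike.congr_fun hψ m⟩

/-- Characters factor through maps on whose kernel they vanish. -/
lemma factor {B : Type*} [AddCommGroup B] (u : A →+ B) (g : A →+ AddCircle (1 : ℚ))
    (h : ∀ a, u a = 0 → g a = 0) :
    ∃ ψ : B →+ AddCircle (1 : ℚ), ∀ a, ψ (u a) = g a := by
  let e := QuotientAddGroup.quotientKerEquivRange u
  let gbar : A ⧸ u.ker →+ AddCircle (1 : ℚ) :=
    QuotientAddGroup.lift u.ker g (fun a ha => h a (AddMonoidHom.mem_ker.mp ha))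
  let c : u.range →+ AddCircle (1 : ℚ) := gbar.comp e.symm.toAddMonoidHom
  obtain ⟨ψ, hψ⟩ := extend u.range.subtype Subtype.coe_injective c
  refine ⟨ψ, fun a => ?_⟩
  have hmem : u a ∈ u.range := ⟨a, rfl⟩
  have h1 : e (QuotientAddGroup.mk a) = ⟨u a, hmem⟩ := rfl
  calc ψ (u a) = ψ (u.range.subtype ⟨u a, hmem⟩) := rfl
    _ = c ⟨u a, hmem⟩ := hψ _
    _ = gbar (e.symm (e (QuotientAddGroup.mk a))) := by rw [h1]; rfl
    _ = gbar (QuotientAddGroup.mk a) := by rw [e.symm_apply_apply]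
    _ = g a := rfl

end NStarAux

/-- Let `A` be a nondegenerate finite quadratic form and `n` an integer.
Then the set `A^{n*} = {δ | ∀ γ ∈ A_n, b γ δ = n • q γ}` is nonempty and is a coset of
`nA`, i.e. `A^{n*} = δ₀ + nA` for any `δ₀ ∈ A^{n*}`.  Moreover `A^{n*}` contains an
element `δ` with `2 • δ = 0`. -/
theorem nStar_nonempty_coset_and_contains_two_torsion
    {A : Type*} [AddCommGroup A] [Fintype A]
    (q : A → AddCircle (1 : ℚ))
    (hq : ∀ (k : ℤ) (γ : A), q (k • γ) = k ^ 2 • q γ)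
    (b : A → A → AddCircle (1 : ℚ))
    (hb : ∀ γ δ : A, b γ δ = q (γ + δ) - q γ - q δ)
    (hb_add_left : ∀ γ₁ γ₂ δ : A, b (γ₁ + γ₂) δ = b γ₁ δ + b γ₂ δ)
    (hb_add_right : ∀ γ δ₁ δ₂ : A, b γ (δ₁ + δ₂) = b γ δ₁ + b γ δ₂)
    (hnd : Function.Injective (fun δ : A => fun γ : A => b γ δ))
    (n : ℤ) :
    {δ : A | ∀ γ : A, n • γ = 0 → b γ δ = n • q γ}.Nonempty ∧
    (∀ δ₀ ∈ {δ : A | ∀ γ : A, n • γ = 0 → b γ δ = n • q γ},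
      {δ : A | ∀ γ : A, n • γ = 0 → b γ δ = n • q γ} =
        {δ : A | ∃ γ : A, δ = δ₀ + n • γ}) ∧
    (∃ δ ∈ {δ : A | ∀ γ : A, n • γ = 0 → b γ δ = n • q γ}, (2 : ℤ) • δ = 0) := by
  classical
  -- basic consequences of bilinearity
  have hb0l : ∀ δ : A, b 0 δ = 0 := by
    intro δ
    have h := hb_add_left 0 0 δ
    rw [add_zero] at h
    have h2 : b 0 δ + b 0 δ = b 0 δ + 0 := by rw [add_zero, ← h]
    exact add_left_cancel h2
  have hsymm : ∀ γ δ : A, b γ δ = b δ γ := by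
    intro γ δ; rw [hb, hb, add_comm δ γ]; abel
  have hb0r : ∀ γ : A, b γ 0 = 0 := fun γ => by rw [hsymm, hb0l]
  -- bundled hom in the second variable (outer) / first variable (inner)
  let B : A →+ A →+ AddCircle (1 : ℚ) :=
    AddMonoidHom.mk' (fun δ => AddMonoidHom.mk' (fun γ => b γ δ)
        (fun γ₁ γ₂ => hb_add_left γ₁ γ₂ δ))
      (fun δ₁ δ₂ => AddMonoidHom.ext fun γ => hb_add_right γ δ₁ δ₂)
  have hzr : ∀ (k : ℤ) (γ δ : A), b γ (k • δ) = k • b γ δ := by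
    intro k γ δ
    have h := map_zsmul B k δ
    calc b γ (k • δ) = B (k • δ) γ := rfl
      _ = (k • B δ) γ := by rw [h]
      _ = k • b γ δ := rfl
  have hzl : ∀ (k : ℤ) (γ δ : A), b (k • γ) δ = k • b γ δ := by
    intro k γ δ; rw [hsymm, hzr, hsymm]
  have hbself : ∀ γ : A, b γ γ = (2 : ℤ) • ((2 : ℤ) • q γ) - (2 : ℤ) • q γ := by
    intro γ
    have h4 : q (γ + γ) = (2 : ℤ) • ((2 : ℤ) • q γ) := by
      rw [← two_zsmul, hq, pow_two, mul_smul]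
    rw [hb, h4]
    abel
  have hbself' : ∀ γ : A, (2 : ℤ) • q γ = b γ γ := by
    intro γ; rw [hbself]; abel
  have hn2 : ∀ γ : A, n • γ = 0 → (2 : ℤ) • (n • q γ) = 0 := by
    intro γ hγ
    have h1 : n • b γ γ = 0 := by rw [← hzl n γ γ, hγ, hb0l]
    rw [smul_comm, hbself', h1]
  have hD0 : ∀ β : A, n • ((2 : ℤ) • β) = 0 → n • q ((2 : ℤ) • β) = 0 := by
    intro β hβ
    have h0 : b β (n • ((2 : ℤ) • β)) = 0 := by rw [hβ, hb0r]
    rw [hzr, hzr] at h0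
    have hq2 : q ((2 : ℤ) • β) = (2 : ℤ) • ((2 : ℤ) • q β) := by
      rw [hq, pow_two, mul_smul]
    rw [hq2]
    calc n • ((2:ℤ) • ((2:ℤ) • q β)) = n • ((2:ℤ) • b β β) := by rw [hbself' β]
      _ = 0 := h0
  have hNadd : ∀ γ δ : A, n • γ = 0 → n • q (γ + δ) = n • q γ + n • q δ := by
    intro γ δ hγ
    have h1 : q (γ + δ) = b γ δ + q γ + q δ := by rw [hb]; abel
    have h2 : n • b γ δ = 0 := by rw [← hzl, hγ, hb0l]
    rw [h1, smul_add, smul_add, h2, zero_add]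
  -- the subgroup A_n
  let N : AddSubgroup A :=
    { carrier := {γ : A | n • γ = 0}
      zero_mem' := smul_zero n
      add_mem' := by
        intro a c ha hc
        simp only [Set.mem_setOf_eq] at *
        rw [smul_add, ha, hc, add_zero]
      neg_mem' := by
        intro a ha
        simp only [Set.mem_setOf_eq] at *
        rw [smul_neg, ha, neg_zero] }
  let φ : ↥N →+ AddCircle (1 : ℚ) :=
    AddMonoidHom.mk' (fun γ => n • q γ.1) (fun γ δ => hNadd γ.1 δ.1 γ.2)
  -- the subgroup 2A and the quotient V = A/2A
  let u2 : A →+ A := AddMonoidHom.mk' (fun a => (2 : ℤ) • a) (fun a c => smul_add 2 a c)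
  let D : AddSubgroup A := u2.range
  haveI instV : Module (ZMod 2) (A ⧸ D) :=
    QuotientAddGroup.zmodModule (n := 2) (by
      intro x
      exact ⟨x, by show (2 : ℤ) • x = (2 : ℕ) • x; rw [two_zsmul, two_nsmul]⟩)
  -- the 2-torsion subgroup of ℚ/ℤ
  let Wgrp : AddSubgroup (AddCircle (1 : ℚ)) :=
    { carrier := {x | (2 : ℤ) • x = 0}
      zero_mem' := smul_zero 2
      add_mem' := by
        intro a c ha hc
        simp only [Set.mem_setOf_eq] at *
        rw [smul_add, ha, hc, add_zero]
      neg_mem' := by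
        intro a ha
        simp only [Set.mem_setOf_eq] at *
        rw [smul_neg, ha, neg_zero] }
  haveI instW : Module (ZMod 2) ↥Wgrp :=
    AddCommGroup.zmodModule (n := 2) (by
      rintro ⟨x, hx⟩
      apply Subtype.ext
      show (2 : ℕ) • x = 0
      rw [two_nsmul, ← two_zsmul]
      exact hx)
  let Nv : ↥N →+ A ⧸ D := (QuotientAddGroup.mk' D).comp N.subtype
  let g : ↥N →+ ↥Wgrp := AddMonoidHom.codRestrict φ Wgrp (fun γ => hn2 γ.1 γ.2)
  have hgker : ∀ γ : ↥N, Nv γ = 0 → g γ = 0 := by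
    intro γ hγ
    have hmem : (γ : A) ∈ D := (QuotientAddGroup.eq_zero_iff (γ : A)).mp hγ
    obtain ⟨β, hβ⟩ := hmem
    apply Subtype.ext
    show φ γ = 0
    have hβ' : (2 : ℤ) • β = (γ : A) := hβ
    calc φ γ = n • q (γ : A) := rfl
      _ = n • q ((2 : ℤ) • β) := by rw [hβ']
      _ = 0 := hD0 β (by rw [hβ']; exact γ.2)
  let ebar := QuotientAddGroup.quotientKerEquivRange Nv
  let gbar : ↥N ⧸ Nv.ker →+ ↥Wgrp :=
    QuotientAddGroup.lift Nv.ker g (fun γ hγ => hgker γ (AddMonoidHom.mem_ker.mp hγ))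
  let f0 : ↥Nv.range →+ ↥Wgrp := gbar.comp ebar.symm.toAddMonoidHom
  have hf0 : ∀ γ : ↥N, f0 ⟨Nv γ, ⟨γ, rfl⟩⟩ = g γ := by
    intro γ
    have h1 : ebar (QuotientAddGroup.mk γ) = ⟨Nv γ, ⟨γ, rfl⟩⟩ := rfl
    show gbar (ebar.symm ⟨Nv γ, ⟨γ, rfl⟩⟩) = g γ
    rw [← h1, ebar.symm_apply_apply]
    rfl
  let p : Submodule (ZMod 2) (A ⧸ D) := AddSubgroup.toZModSubmodule 2 Nv.range
  let f : ↥p →ₗ[ZMod 2] ↥Wgrp := AddMonoidHom.toZModLinearMap 2 f0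
  haveI : Fact (Nat.Prime 2) := ⟨Nat.prime_two⟩
  obtain ⟨F, hF⟩ := LinearMap.exists_extend f
  let ψ0 : A →+ AddCircle (1 : ℚ) :=
    Wgrp.subtype.comp (F.toAddMonoidHom.comp (QuotientAddGroup.mk' D))
  have hψ0N : ∀ γ : A, n • γ = 0 → ψ0 γ = n • q γ := by
    intro γ hγ
    have hmem : (QuotientAddGroup.mk' D) γ ∈ p := ⟨⟨γ, hγ⟩, rfl⟩
    have h1 : F ((QuotientAddGroup.mk' D) γ) = f ⟨_, hmem⟩ :=
      DFunLike.congr_fun hF (⟨_, hmem⟩ : ↥p)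
    show (F ((QuotientAddGroup.mk' D) γ) : AddCircle (1 : ℚ)) = n • q γ
    rw [h1]
    have h2 : f ⟨_, hmem⟩ = f0 ⟨Nv ⟨γ, hγ⟩, ⟨⟨γ, hγ⟩, rfl⟩⟩ := rfl
    rw [h2, hf0]
    rfl
  have hψ0tor : ∀ a : A, (2 : ℤ) • ψ0 a = 0 := fun a => (F ((QuotientAddGroup.mk' D) a)).2
  -- surjectivity of δ ↦ b ( · , δ)
  have hTinj : Function.Injective ⇑B := by
    intro δ δ' h
    apply hnd
    funext γ
    exact DFunLike.congr_fun h γ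
  have hsurj := NStarAux.surj ⇑B hTinj
  obtain ⟨δ₂, hδ₂⟩ := hsurj ψ0
  have hbδ₂ : ∀ γ : A, b γ δ₂ = ψ0 γ := fun γ => DFunLike.congr_fun hδ₂ γ
  have hδ₂S : δ₂ ∈ {δ : A | ∀ γ : A, n • γ = 0 → b γ δ = n • q γ} := by
    intro γ hγ
    rw [hbδ₂, hψ0N γ hγ]
  have h2δ₂ : (2 : ℤ) • δ₂ = 0 := by
    apply hnd
    funext γ
    show b γ ((2 : ℤ) • δ₂) = b γ 0
    rw [hzr, hbδ₂, hψ0tor, hb0r]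
  refine ⟨⟨δ₂, hδ₂S⟩, ?_, ⟨δ₂, hδ₂S, h2δ₂⟩⟩
  intro δ₀ hδ₀
  ext δ
  constructor
  · intro hδ
    -- δ - δ₀ is orthogonal to A_n
    have hε : ∀ γ : A, n • γ = 0 → b γ (δ - δ₀) = 0 := by
      intro γ hγ
      have h1 := hb_add_right γ (δ - δ₀) δ₀
      rw [sub_add_cancel] at h1
      have h2 : b γ δ = b γ δ₀ := by rw [hδ γ hγ, hδ₀ γ hγ]
      rw [h2] at h1
      exact right_eq_add.mp h1
    let un : A →+ A := AddMonoidHom.mk' (fun a => n • a) (fun a c => smul_add n a c)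
    let grow : A →+ AddCircle (1 : ℚ) :=
      AddMonoidHom.mk' (fun a => b a (δ - δ₀)) (fun a₁ a₂ => hb_add_left a₁ a₂ _)
    obtain ⟨ψ, hψ⟩ := NStarAux.factor un grow (fun a ha => hε a ha)
    obtain ⟨δ', hδ'⟩ := hsurj ψ
    have hkey : ∀ γ : A, b γ (n • δ') = b γ (δ - δ₀) := by
      intro γ
      have h3 : b γ δ' = ψ γ := DFunLike.congr_fun hδ' γ
      rw [hzr, h3, ← map_zsmul ψ n γ]
      exact hψ γ
    have h4 : n • δ' = δ - δ₀ := by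
      apply hnd
      funext γ
      exact hkey γ
    exact ⟨δ', by rw [h4]; abel⟩
  · rintro ⟨γ', rfl⟩
    intro γ hγ
    rw [hb_add_right, hδ₀ γ hγ, hzr, ← hzl, hγ, hb0l, add_zero]
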